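/- Let (V, b) be a finite-dimensional symplectic vector space over an algebraically closed field K of characteristic 2 and let u ∈ Sp(V) be unipotent. Suppose V = U_1 ⊕ ⋯ ⊕ U_t where the U_i are pairwise b-orthogonal nondegenerate u-invariant subspaces. Let ũ denote the map induced by u on S²(V), let ũ_i denote the map induced by the restriction of u on S²(U_i), let φ : S²(V) → K be determined by φ(xy) = b(x, y), and let φ_i : S²(U_i) → K be determined by the restriction of b. Then for every integer m ≥ 0: ker(ũ − 1)^m ⊆ ker φ if and only if ker(ũ_i − 1)^m ⊆ ker φ_i for all 1 ≤ i ≤ t. -/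

import Mathlib

open scoped TensorProduct DirectSum

/-- The symmetric square `S²(V)`: the quotient of `V ⊗ V` by the span of all
`x ⊗ y - y ⊗ x`. -/
noncomputable abbrev SymSq (K V : Type*) [Field K] [AddCommGroup V] [Module K V] : Type _ :=
  TensorProduct K V V ⧸
    Submodule.span K {z : TensorProduct K V V | ∃ x y : V, z = x ⊗ₜ[K] y - y ⊗ₜ[K] x}

/-- The product `xy` in the symmetric square, i.e. the image of `x ⊗ y`. -/
noncomputable def SymSq.mul {K V : Type*} [Field K] [AddCommGroup V] [Module K V]
    (x y : V) : SymSq K V :=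
  Submodule.Quotient.mk (x ⊗ₜ[K] y)

namespace SymSqAux

variable {K : Type*} [Field K] {V W P : Type*} [AddCommGroup V] [Module K V]
  [AddCommGroup W] [Module K W] [AddCommGroup P] [Module K P]

theorem ext {f g : SymSq K V →ₗ[K] P}
    (h : ∀ x y : V, f (SymSq.mul x y) = g (SymSq.mul x y)) : f = g := by
  have h2 : f ∘ₗ Submodule.mkQ _ = g ∘ₗ Submodule.mkQ _ := TensorProduct.ext' h
  refine LinearMap.ext fun z => ?_
  obtain ⟨w, rfl⟩ := Submodule.mkQ_surjective _ z
  exact LinearMap.congr_fun h2 w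

noncomputable def smap (f : V →ₗ[K] W) : SymSq K V →ₗ[K] SymSq K W :=
  Submodule.mapQ _ _ (TensorProduct.map f f) (by
    rw [Submodule.span_le]
    rintro z ⟨x, y, rfl⟩
    exact Submodule.subset_span ⟨f x, f y, by simp⟩)

theorem smap_mul (f : V →ₗ[K] W) (x y : V) :
    smap f (SymSq.mul x y) = SymSq.mul (f x) (f y) := by
  simp [smap, SymSq.mul, Submodule.mapQ_apply]

theorem comp_pow (f : V →ₗ[K] W) (A : Module.End K V) (B : Module.End K W)
    (h : ∀ z, f (A z) = B (f z)) (m : ℕ) (z : V) : f ((A ^ m) z) = (B ^ m) (f z) := by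
  induction m with
  | zero => simp
  | succ n ih =>
    rw [pow_succ', pow_succ', Module.End.mul_apply, Module.End.mul_apply, h, ih]

theorem comp_pow_sub_one (f : V →ₗ[K] W) (A : Module.End K V) (B : Module.End K W)
    (h : ∀ z, f (A z) = B (f z)) (m : ℕ) (z : V) :
    f (((A - 1) ^ m) z) = ((B - 1) ^ m) (f z) := by
  refine comp_pow f (A - 1) (B - 1) (fun z => ?_) m z
  simp [h z]

end SymSqAux

set_option maxHeartbeats 1000000 in
/-- For unipotent `u ∈ Sp(V)` and an orthogonal decomposition `V = U₁ ⊥ ⋯ ⊥ U_t` into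
nondegenerate `u`-invariant subspaces: `ker(ũ - 1)^m ⊆ ker φ` if and only if
`ker(ũᵢ - 1)^m ⊆ ker φᵢ` for all `i`. -/
theorem stmt7 (K : Type*) [Field K] [IsAlgClosed K] [CharP K 2]
    (V : Type*) [AddCommGroup V] [Module K V] [FiniteDimensional K V]
    (b : V →ₗ[K] V →ₗ[K] K)
    (halt : ∀ v : V, b v v = 0)
    (hnd : ∀ v : V, (∀ w : V, b v w = 0) → v = 0)
    (u : Module.End K V)
    (hSp : ∀ v w : V, b (u v) (u w) = b v w)
    (hunip : IsNilpotent (u - 1))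
    (t : ℕ) (U : Fin t → Submodule K V)
    (hint : DirectSum.IsInternal U)
    (horth : ∀ i j, i ≠ j → ∀ x ∈ U i, ∀ y ∈ U j, b x y = 0)
    (hndU : ∀ i, ∀ x ∈ U i, (∀ y ∈ U i, b x y = 0) → x = 0)
    (hinv : ∀ i, ∀ x ∈ U i, u x ∈ U i)
    (ut : Module.End K (SymSq K V))
    (hut : ∀ x y : V, ut (SymSq.mul x y) = SymSq.mul (u x) (u y))
    (φ : SymSq K V →ₗ[K] K)
    (hφ : ∀ x y : V, φ (SymSq.mul x y) = b x y)
    (ui : ∀ i, Module.End K ↥(U i))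
    (hui : ∀ i (x : ↥(U i)), (↑(ui i x) : V) = u ↑x)
    (uti : ∀ i, Module.End K (SymSq K ↥(U i)))
    (huti : ∀ i (x y : ↥(U i)), uti i (SymSq.mul x y) = SymSq.mul (ui i x) (ui i y))
    (φi : ∀ i, SymSq K ↥(U i) →ₗ[K] K)
    (hφi : ∀ i (x y : ↥(U i)), φi i (SymSq.mul x y) = b ↑x ↑y) :
    ∀ m : ℕ,
      LinearMap.ker ((ut - 1) ^ m) ≤ LinearMap.ker φ ↔
        ∀ i, LinearMap.ker ((uti i - 1) ^ m) ≤ LinearMap.ker (φi i) := by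
  classical
  -- the inverse of the direct sum decomposition
  set e : (⨁ i, ↥(U i)) ≃ₗ[K] V :=
    LinearEquiv.ofBijective (DirectSum.coeLinearMap U) hint with he
  -- the projections onto the factors
  set p : ∀ i, V →ₗ[K] ↥(U i) :=
    fun i => (DirectSum.component K (Fin t) (fun i => ↥(U i)) i) ∘ₗ e.symm.toLinearMap
    with hp
  have hcomp : ∀ i (d : ⨁ j, ↥(U j)), p i (e d) = d i := by
    intro i d
    rw [hp]
    simp only [LinearMap.comp_apply, LinearEquiv.coe_coe, LinearEquiv.symm_apply_apply]
    rfl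
  have hof : ∀ (j : Fin t) (w : ↥(U j)),
      e (DirectSum.of (fun k => ↥(U k)) j w) = (↑w : V) := by
    intro j w
    rw [he]
    exact DirectSum.coeLinearMap_of U j w
  have hpself : ∀ i (w : ↥(U i)), p i ↑w = w := by
    intro i w
    rw [← hof i w, hcomp, DirectSum.of_eq_same]
  have hpne : ∀ i j, j ≠ i → ∀ (w : ↥(U j)), p i (↑w : V) = 0 := by
    intro i j hij w
    rw [← hof j w, hcomp, DirectSum.of_eq_of_ne _ _ _ hij.symm]
  have hdec : ∀ x : V, ∑ i, ((p i x : ↥(U i)) : V) = x := by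
    intro x
    conv_rhs => rw [← e.apply_symm_apply x, ← DirectSum.sum_univ_of (e.symm x)]
    rw [map_sum]
    refine Finset.sum_congr rfl fun i _ => ?_
    rw [hof]
    congr 1
  have hpu : ∀ i (x : V), p i (u x) = ui i (p i x) := by
    intro i x
    conv_lhs => rw [← hdec x]
    rw [map_sum, map_sum]
    have key : ∀ j, p i (u ((p j x : ↥(U j)) : V)) =
        if j = i then ui i (p i x) else 0 := by
      intro j
      rw [← hui j (p j x)]
      by_cases hji : j = i
      · subst hji; simp [hpself j (ui j (p j x))]
      · simp [hji, hpne i j hji (ui j (p j x))]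
    rw [Finset.sum_congr rfl fun j _ => key j]
    simp
  have hbdec : ∀ x y : V, b x y = ∑ i, b ↑(p i x) ↑(p i y) := by
    intro x y
    have step : b x y = ∑ j, ∑ i, b ↑(p i x) ↑(p j y) := by
      conv_lhs => rw [← hdec x, ← hdec y]
      rw [map_sum]
      refine Finset.sum_congr rfl fun j _ => ?_
      rw [map_sum, LinearMap.sum_apply]
    rw [step]
    refine Finset.sum_congr rfl fun j _ => ?_
    rw [Finset.sum_eq_single j]
    · intro i _ hij
      exact horth i j hij _ (p i x).2 _ (p j y).2
    · simp
  -- the induced maps on symmetric squares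
  set ι : ∀ i, SymSq K ↥(U i) →ₗ[K] SymSq K V := fun i => SymSqAux.smap (U i).subtype
    with hidef
  set π : ∀ i, SymSq K V →ₗ[K] SymSq K ↥(U i) := fun i => SymSqAux.smap (p i) with hpidef
  have hι : ∀ i (x y : ↥(U i)), ι i (SymSq.mul x y) = SymSq.mul (↑x : V) ↑y :=
    fun i x y => SymSqAux.smap_mul _ x y
  have hπ : ∀ i (x y : V), π i (SymSq.mul x y) = SymSq.mul (p i x) (p i y) :=
    fun i x y => SymSqAux.smap_mul _ x y
  have hιcomm : ∀ i (z : SymSq K ↥(U i)), ι i (uti i z) = ut (ι i z) := by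
    intro i
    have hc : (ι i) ∘ₗ (uti i) = ut ∘ₗ (ι i) := by
      refine SymSqAux.ext fun x y => ?_
      rw [LinearMap.comp_apply, LinearMap.comp_apply, huti, hι, hι, hut, hui, hui]
    exact fun z => LinearMap.congr_fun hc z
  have hπcomm : ∀ i (z : SymSq K V), π i (ut z) = uti i (π i z) := by
    intro i
    have hc : (π i) ∘ₗ ut = (uti i) ∘ₗ (π i) := by
      refine SymSqAux.ext fun x y => ?_
      rw [LinearMap.comp_apply, LinearMap.comp_apply, hut, hπ, hπ, huti, hpu, hpu]
    exact fun z => LinearMap.congr_fun hc z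
  have hφι : ∀ i (z : SymSq K ↥(U i)), φ (ι i z) = φi i z := by
    intro i
    have hc : φ ∘ₗ (ι i) = φi i := by
      refine SymSqAux.ext fun x y => ?_
      rw [LinearMap.comp_apply, hι, hφ, hφi]
    exact fun z => LinearMap.congr_fun hc z
  have hφdec : ∀ z : SymSq K V, φ z = ∑ i, φi i (π i z) := by
    have hc : φ = ∑ i, (φi i) ∘ₗ (π i) := by
      refine SymSqAux.ext fun x y => ?_
      rw [hφ, LinearMap.sum_apply, hbdec]
      refine Finset.sum_congr rfl fun i _ => ?_
      conv_rhs => rw [LinearMap.comp_apply, hπ i x y, hφi]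
    intro z
    rw [hc, LinearMap.sum_apply]
    exact Finset.sum_congr rfl fun i _ => rfl
  intro m
  constructor
  · intro H i z hz
    have hz0 : ((uti i - 1) ^ m) z = 0 := LinearMap.mem_ker.mp hz
    have h1 : ((ut - 1) ^ m) (ι i z) = 0 := by
      rw [← SymSqAux.comp_pow_sub_one (ι i) (uti i) ut (hιcomm i) m z, hz0, map_zero]
    have h2 : φ (ι i z) = 0 := H (LinearMap.mem_ker.mpr h1)
    rw [LinearMap.mem_ker, ← hφι i z]
    exact h2
  · intro H z hz
    have hz0 : ((ut - 1) ^ m) z = 0 := LinearMap.mem_ker.mp hz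
    rw [LinearMap.mem_ker, hφdec]
    refine Finset.sum_eq_zero fun i _ => ?_
    have h1 : ((uti i - 1) ^ m) (π i z) = 0 := by
      rw [← SymSqAux.comp_pow_sub_one (π i) ut (uti i) (hπcomm i) m z, hz0, map_zero]
    exact H i (LinearMap.mem_ker.mpr h1)
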